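/- Let X and Y be topological spaces, f : X → Y a continuous open surjection with connected fibers, and suppose X is connected. Then for any sheaf G of sets (or abelian groups) on Y, the global sections of the pullback sheaf f^*G on X are naturally isomorphic to the global sections of G on Y. -/

import Mathlib

open CategoryTheory TopologicalSpace Opposite

namespace Stmt0Aux

open TopCat TopCat.Presheaf

variable {X Y : TopCat.{0}} (f : X ⟶ Y)

/-- The stalk map induced by a morphism to a pushforward. -/
noncomputable def psi (G : TopCat.Sheaf (Type) Y) (F : TopCat.Sheaf (Type) X)
    (θ : G ⟶ (TopCat.Sheaf.pushforward (Type) f).obj F) (x : X) :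
    G.presheaf.stalk (f x) ⟶ F.presheaf.stalk x :=
  (stalkFunctor (Type) (f x)).map θ.hom ≫ F.presheaf.stalkPushforward (Type) f x

lemma psi_germ (G : TopCat.Sheaf (Type) Y) (F : TopCat.Sheaf (Type) X)
    (θ : G ⟶ (TopCat.Sheaf.pushforward (Type) f).obj F) (x : X)
    (V : Opens Y) (hV : f x ∈ V) :
    G.presheaf.germ V (f x) hV ≫ psi f G F θ x =
      θ.hom.app (op V) ≫ F.presheaf.germ ((Opens.map f).obj V) x hV := by
  erw [psi, ← Category.assoc, stalkFunctor_map_germ, Category.assoc]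
  exact congrArg (fun u => θ.hom.app (op V) ≫ u) (stalkPushforward_germ Type f F.presheaf V x hV)

end Stmt0Aux

namespace Stmt0Aux

open TopCat TopCat.Presheaf

lemma psi_germ_apply {X Y : TopCat.{0}} (f : X ⟶ Y) (G : TopCat.Sheaf (Type) Y)
    (F : TopCat.Sheaf (Type) X)
    (θ : G ⟶ (TopCat.Sheaf.pushforward (Type) f).obj F) (x : X)
    (V : Opens Y) (hV : f x ∈ V) (s : G.presheaf.obj (op V)) :
    psi f G F θ x (G.presheaf.germ V (f x) hV s) =
      F.presheaf.germ ((Opens.map f).obj V) x hV (θ.hom.app (op V) s) :=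
  ConcreteCategory.congr_hom (psi_germ f G F θ x V hV) s

lemma key {X Y : TopCat.{0}} (f : X ⟶ Y)
    (hopen : IsOpenMap f) (hsurj : Function.Surjective f)
    (hfib : ∀ y : Y, IsConnected (f ⁻¹' {y}))
    (G : TopCat.Sheaf (Type) Y) (F : TopCat.Sheaf (Type) X)
    (θ : G ⟶ (TopCat.Sheaf.pushforward (Type) f).obj F)
    (hψ : ∀ x : X, Function.Bijective (psi f G F θ x)) :
    Function.Bijective (θ.hom.app (op ⊤)) := by
  have hΩ : ∀ x : X, x ∈ (Opens.map f).obj (⊤ : Opens Y) := fun x => trivial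
  constructor
  · intro s t hst
    apply TopCat.Presheaf.section_ext G ⊤
    intro y hy
    obtain ⟨x, rfl⟩ := hsurj y
    apply (hψ x).1
    have h1 := psi_germ_apply f G F θ x ⊤ hy s
    have h2 := psi_germ_apply f G F θ x ⊤ hy t
    exact h1.trans ((congrArg (F.presheaf.germ ((Opens.map f).obj ⊤) x hy) hst).trans h2.symm)
  · intro t
    obtain ⟨g, hg⟩ : ∃ g : ∀ x : X, G.presheaf.stalk (f x), ∀ x : X,
        psi f G F θ x (g x) = F.presheaf.germ ((Opens.map f).obj ⊤) x (hΩ x) t := by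
      choose g hg using fun x : X =>
        (hψ x).2 (F.presheaf.germ ((Opens.map f).obj ⊤) x (hΩ x) t)
      exact ⟨g, hg⟩
    have claim : ∀ x : X, ∃ (V : Opens Y) (hV : f x ∈ V) (s : G.presheaf.obj (op V))
        (U : Opens X) (hxU : x ∈ U) (hUV : U ≤ (Opens.map f).obj V),
        ∀ x' (hx' : x' ∈ U), g x' = G.presheaf.germ V (f x') (hUV hx') s := by
      intro x
      obtain ⟨V, hV, s, hs⟩ := G.presheaf.exists_germ_eq (g x)
      have h0 : F.presheaf.germ ((Opens.map f).obj V) x hV (θ.hom.app (op V) s)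
          = F.presheaf.germ ((Opens.map f).obj ⊤) x (hΩ x) t := by
        exact (psi_germ_apply f G F θ x V hV s).symm.trans
          ((congrArg (psi f G F θ x) hs).trans (hg x))
      obtain ⟨U, hxU, iU, iV, heq⟩ := F.presheaf.germ_eq x hV (hΩ x) _ _ h0
      refine ⟨V, hV, s, U, hxU, iU.le, ?_⟩
      intro x' hx'
      apply (hψ x').1
      have h4 : psi f G F θ x' (g x') = F.presheaf.germ ((Opens.map f).obj ⊤) x' (hΩ x') t :=
        hg x'
      have h3 : psi f G F θ x' (G.presheaf.germ V (f x') (iU.le hx') s)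
          = F.presheaf.germ ((Opens.map f).obj ⊤) x' (hΩ x') t := by
        erw [psi_germ_apply]
        have r1 := ConcreteCategory.congr_hom (F.presheaf.germ_res iU x' hx') (θ.hom.app (op V) s)
        have r2 := ConcreteCategory.congr_hom (F.presheaf.germ_res iV x' hx') t
        exact r1.symm.trans ((congrArg (F.presheaf.germ U x' hx') heq).trans r2)
      exact h4.trans h3.symm
    choose V hV s U hxU hUV hloc using claim
    have hconst : ∀ (y : Y) (x x' : X) (hx : f x = y) (hx' : f x' = y),
        (hx ▸ g x : G.presheaf.stalk y) = hx' ▸ g x' := by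
      intro y
      have hcs : ConnectedSpace (f ⁻¹' {y} : Set X) :=
        isConnected_iff_connectedSpace.mp (hfib y)
      have hlc : IsLocallyConstant
          (fun p : (f ⁻¹' {y} : Set X) => (p.2 ▸ g p.1 : G.presheaf.stalk y)) := by
        rw [IsLocallyConstant.iff_exists_open]
        rintro ⟨x, (hx : f x = y)⟩
        refine ⟨Subtype.val ⁻¹' (U x : Set X),
          (U x).2.preimage continuous_subtype_val, hxU x, ?_⟩
        rintro ⟨x', (hx' : f x' = y)⟩ (hx'U : x' ∈ U x)
        have e1 : ∀ (x'' : X) (hx'' : f x'' = y) (hm : x'' ∈ U x),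
            (hx'' ▸ g x'' : G.presheaf.stalk y)
              = G.presheaf.germ (V x) y (hx'' ▸ (hUV x hm)) (s x) := by
          intro x'' hx'' hm
          subst hx''
          exact hloc x x'' hm
        exact (e1 x' hx' hx'U).trans (e1 x hx (hxU x)).symm
      intro x x' hx hx'
      exact hlc.apply_eq_of_preconnectedSpace ⟨x, hx⟩ ⟨x', hx'⟩
    have hkey : ∀ x : X, ((hsurj (f x)).choose_spec ▸ g ((hsurj (f x)).choose)
        : G.presheaf.stalk (f x)) = g x :=
      fun x => hconst (f x) _ x (hsurj (f x)).choose_spec rfl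
    set h : ∀ y : Y, G.presheaf.stalk y :=
      fun y => (hsurj y).choose_spec ▸ g ((hsurj y).choose) with hhdef
    set W : X → Opens Y := fun x => ⟨f '' (U x : Set X), hopen _ (U x).2⟩ with hWdef
    have hWV : ∀ x : X, W x ≤ V x := by
      rintro x y ⟨x', hx', rfl⟩
      exact hUV x hx'
    have hgermW : ∀ (x : X) (y : Y) (hy : y ∈ W x),
        G.presheaf.germ (W x) y hy (G.presheaf.map (homOfLE (hWV x)).op (s x)) = h y := by
      intro x y hy
      obtain ⟨x', hx'U, rfl⟩ := hy
      have hyW : f x' ∈ W x := ⟨x', hx'U, rfl⟩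
      have r := ConcreteCategory.congr_hom (G.presheaf.germ_res (homOfLE (hWV x)) (f x') hyW) (s x)
      exact r.trans ((hloc x x' hx'U).symm.trans (hkey x').symm)
    have compat : TopCat.Presheaf.IsCompatible G.presheaf W
        (fun x => G.presheaf.map (homOfLE (hWV x)).op (s x)) := by
      intro i j
      apply TopCat.Presheaf.section_ext G (W i ⊓ W j)
      intro y hy
      have l1 := ConcreteCategory.congr_hom (G.presheaf.germ_res (Opens.infLELeft (W i) (W j)) y hy)
        (G.presheaf.map (homOfLE (hWV i)).op (s i))
      have l2 := ConcreteCategory.congr_hom (G.presheaf.germ_res (Opens.infLERight (W i) (W j)) y hy)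
        (G.presheaf.map (homOfLE (hWV j)).op (s j))
      exact l1.trans ((hgermW i y _).trans ((hgermW j y _).symm.trans l2.symm))
    have hcover : (⊤ : Opens Y) ≤ iSup W := by
      intro y _
      obtain ⟨x, rfl⟩ := hsurj y
      exact Opens.mem_iSup.mpr ⟨x, ⟨x, hxU x, rfl⟩⟩
    obtain ⟨sg, hsg, -⟩ := G.existsUnique_gluing' W ⊤ (fun x => homOfLE le_top) hcover _ compat
    have hgermsg : ∀ (y : Y) (hy : y ∈ (⊤ : Opens Y)), G.presheaf.germ ⊤ y hy sg = h y := by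
      intro y hy
      obtain ⟨x, rfl⟩ := hsurj y
      have hyW : f x ∈ W x := ⟨x, hxU x, rfl⟩
      have r := ConcreteCategory.congr_hom (G.presheaf.germ_res (homOfLE (le_top : W x ≤ ⊤)) (f x) hyW) sg
      exact r.symm.trans ((congrArg (G.presheaf.germ (W x) (f x) hyW) (hsg x)).trans
        (hgermW x (f x) hyW))
    refine ⟨sg, ?_⟩
    apply TopCat.Presheaf.section_ext F ((Opens.map f).obj ⊤)
    intro x hx
    have p := psi_germ_apply f G F θ x ⊤ trivial sg
    have q : psi f G F θ x (h (f x)) = F.presheaf.germ ((Opens.map f).obj ⊤) x (hΩ x) t := by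
      exact (congrArg (psi f G F θ x) (hkey x)).trans (hg x)
    exact p.symm.trans ((congrArg (psi f G F θ x) (hgermsg (f x) trivial)).trans q)

end Stmt0Aux

namespace Stmt0Aux

open TopCat TopCat.Presheaf

lemma stalkPushforward_natural {X Y : TopCat.{0}} (f : X ⟶ Y) {P Q : TopCat.Presheaf (Type) X}
    (φ : P ⟶ Q) (x : X) :
    (stalkFunctor (Type) (f x)).map ((Presheaf.pushforward (Type) f).map φ) ≫
      Q.stalkPushforward (Type) f x =
    P.stalkPushforward (Type) f x ≫ (stalkFunctor (Type) x).map φ := by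
  apply stalk_hom_ext
  intro U hU
  erw [← Category.assoc, stalkFunctor_map_germ, Category.assoc, stalkPushforward_germ,
    stalkPushforward_germ_assoc, stalkFunctor_map_germ]
  rfl

lemma stalk_injective_of_locallyInjective {X : TopCat.{0}} {P Q : TopCat.Presheaf (Type) X}
    (φ : P ⟶ Q) [CategoryTheory.Presheaf.IsLocallyInjective (Opens.grothendieckTopology X) φ]
    (x : X) : Function.Injective ((stalkFunctor (Type) x).map φ) := by
  intro a b hab
  obtain ⟨U, hU, sa, rfl⟩ := P.exists_germ_eq a
  obtain ⟨U', hU', sb, rfl⟩ := P.exists_germ_eq b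
  have hab' : Q.germ U x hU (φ.app (op U) sa) = Q.germ U' x hU' (φ.app (op U') sb) := by
    have n1 := ConcreteCategory.congr_hom ((stalkFunctor_map_germ U x hU φ)) sa
    have n2 := ConcreteCategory.congr_hom ((stalkFunctor_map_germ U' x hU' φ)) sb
    exact n1.symm.trans (hab.trans n2)
  obtain ⟨W, hW, iU, iV, h⟩ := Q.germ_eq x hU hU' _ _ hab'
  have h' : φ.app (op W) (P.map iU.op sa) = φ.app (op W) (P.map iV.op sb) := by
    have n1 : φ.app (op W) (P.map iU.op sa) = Q.map iU.op (φ.app (op U) sa) :=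
      ConcreteCategory.congr_hom (φ.naturality iU.op) sa
    have n2 : φ.app (op W) (P.map iV.op sb) = Q.map iV.op (φ.app (op U') sb) :=
      ConcreteCategory.congr_hom (φ.naturality iV.op) sb
    exact n1.trans (h.trans n2.symm)
  have hmem := CategoryTheory.Presheaf.equalizerSieve_mem (Opens.grothendieckTopology X) φ _ _ h'
  obtain ⟨V', gVW, hg, hxV'⟩ := hmem x hW
  apply P.germ_ext V' hxV' (gVW ≫ iU) (gVW ≫ iV)
  simpa [Functor.map_comp] using hg

end Stmt0Aux

namespace Stmt0Aux

open TopCat TopCat.Presheaf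

lemma unit_val {X Y : TopCat.{0}} (f : X ⟶ Y) (G : TopCat.Sheaf (Type) Y) :
    ((Functor.sheafPullbackConstruction.sheafAdjunctionContinuous (Opens.map f) (Type)
      (Opens.grothendieckTopology Y) (Opens.grothendieckTopology X)).unit.app G).hom =
      ((Opens.map f).op.lanAdjunction (Type)).unit.app G.val ≫
        (Presheaf.pushforward (Type) f).map
          (CategoryTheory.toSheafify (Opens.grothendieckTopology X)
            ((Opens.map f).op.lan.obj G.val)) := by
  have h := Adjunction.map_restrictFullyFaithful_unit_app
    (L := Functor.sheafPullbackConstruction.sheafPullback (Opens.map f) (Type)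
        (Opens.grothendieckTopology Y) (Opens.grothendieckTopology X)) (R := TopCat.Sheaf.pushforward (Type) f)
    (((Opens.map f).op.lanAdjunction (Type)).comp
      (sheafificationAdjunction (Opens.grothendieckTopology X) (Type)))
    (fullyFaithfulSheafToPresheaf (Opens.grothendieckTopology Y) (Type))
    (Functor.FullyFaithful.id _) (Iso.refl _) (Iso.refl _) G
  simp only [Adjunction.comp_unit_app, Iso.refl_hom, NatTrans.id_app, Functor.map_id,
    Category.comp_id, sheafificationAdjunction_unit_app] at h
  exact h

lemma psi_unit_bijective {X Y : TopCat.{0}} (f : X ⟶ Y) (G : TopCat.Sheaf (Type) Y) (x : X) :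
    Function.Bijective (psi f G ((TopCat.Sheaf.pullback (Type) f).obj G)
      ((TopCat.Sheaf.pullbackPushforwardAdjunction (Type) f).unit.app G) x) := by
  have hb2 : Function.Bijective (psi f G ((Functor.sheafPullbackConstruction.sheafPullback
        (Opens.map f) (Type) (Opens.grothendieckTopology Y) (Opens.grothendieckTopology X)).obj G)
      ((Functor.sheafPullbackConstruction.sheafAdjunctionContinuous (Opens.map f) (Type)
      (Opens.grothendieckTopology Y) (Opens.grothendieckTopology X)).unit.app G) x) := by
    have hdec : psi f G ((Functor.sheafPullbackConstruction.sheafPullback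
          (Opens.map f) (Type) (Opens.grothendieckTopology Y) (Opens.grothendieckTopology X)).obj G)
        ((Functor.sheafPullbackConstruction.sheafAdjunctionContinuous (Opens.map f) (Type)
        (Opens.grothendieckTopology Y) (Opens.grothendieckTopology X)).unit.app G) x =
      Presheaf.stalkPullbackHom (Type) f G.val x ≫
        (stalkFunctor (Type) x).map
          (CategoryTheory.toSheafify (Opens.grothendieckTopology X)
            ((Opens.map f).op.lan.obj G.val)) := by
      have hnat := stalkPushforward_natural f
        (φ := CategoryTheory.toSheafify (Opens.grothendieckTopology X)
          ((Opens.map f).op.lan.obj G.val)) x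
      show (stalkFunctor (Type) (f x)).map
          ((Functor.sheafPullbackConstruction.sheafAdjunctionContinuous (Opens.map f) (Type)
        (Opens.grothendieckTopology Y) (Opens.grothendieckTopology X)).unit.app G).hom ≫
        Presheaf.stalkPushforward (Type) f
          (CategoryTheory.sheafify (Opens.grothendieckTopology X)
            ((Opens.map f).op.lan.obj G.val)) x = _
      erw [unit_val, Functor.map_comp, Category.assoc, hnat, ← Category.assoc]
    rw [hdec]
    have h1 : Function.Bijective (Presheaf.stalkPullbackHom (Type) f G.val x) := by
      rw [← CategoryTheory.isIso_iff_bijective]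
      exact inferInstanceAs (IsIso (Presheaf.stalkPullbackIso (Type) f G.val x).hom)
    have h2 : Function.Bijective ((stalkFunctor (Type) x).map
        (CategoryTheory.toSheafify (Opens.grothendieckTopology X)
          ((Opens.map f).op.lan.obj G.val))) := by
      constructor
      · exact stalk_injective_of_locallyInjective _ x
      · have hs := (TopCat.Presheaf.locally_surjective_iff_surjective_on_stalks
          (CategoryTheory.toSheafify (Opens.grothendieckTopology X)
            ((Opens.map f).op.lan.obj G.val))).mp
          (inferInstanceAs (CategoryTheory.Presheaf.IsLocallySurjective
            (Opens.grothendieckTopology X) (CategoryTheory.toSheafify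
              (Opens.grothendieckTopology X) ((Opens.map f).op.lan.obj G.val)))) x
        exact hs
    exact h2.comp h1
  have hu := Adjunction.unit_leftAdjointUniq_hom_app
    (TopCat.Sheaf.pullbackPushforwardAdjunction (Type) f) (Functor.sheafPullbackConstruction.sheafAdjunctionContinuous (Opens.map f) (Type)
      (Opens.grothendieckTopology Y) (Opens.grothendieckTopology X)) G
  have hcomp : psi f G ((TopCat.Sheaf.pullback (Type) f).obj G)
        ((TopCat.Sheaf.pullbackPushforwardAdjunction (Type) f).unit.app G) x ≫
      (stalkFunctor (Type) x).map ((Adjunction.leftAdjointUniq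
        (TopCat.Sheaf.pullbackPushforwardAdjunction (Type) f) (Functor.sheafPullbackConstruction.sheafAdjunctionContinuous (Opens.map f) (Type)
      (Opens.grothendieckTopology Y) (Opens.grothendieckTopology X))).hom.app G).hom =
      psi f G ((Functor.sheafPullbackConstruction.sheafPullback
        (Opens.map f) (Type) (Opens.grothendieckTopology Y) (Opens.grothendieckTopology X)).obj G)
        ((Functor.sheafPullbackConstruction.sheafAdjunctionContinuous (Opens.map f) (Type)
      (Opens.grothendieckTopology Y) (Opens.grothendieckTopology X)).unit.app G) x := by
    rw [← hu]
    simp only [psi]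
    erw [Category.assoc, ← stalkPushforward_natural, ← Category.assoc, ← Functor.map_comp]
    rfl
  have h3 : Function.Bijective ((stalkFunctor (Type) x).map ((Adjunction.leftAdjointUniq
        (TopCat.Sheaf.pullbackPushforwardAdjunction (Type) f) (Functor.sheafPullbackConstruction.sheafAdjunctionContinuous (Opens.map f) (Type)
      (Opens.grothendieckTopology Y) (Opens.grothendieckTopology X))).hom.app G).hom) := by
    rw [← CategoryTheory.isIso_iff_bijective]
    exact inferInstanceAs (IsIso ((sheafToPresheaf (Opens.grothendieckTopology X) (Type) ⋙
      stalkFunctor (Type) x).mapIso ((Adjunction.leftAdjointUniq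
        (TopCat.Sheaf.pullbackPushforwardAdjunction (Type) f)
        (Functor.sheafPullbackConstruction.sheafAdjunctionContinuous (Opens.map f) (Type)
          (Opens.grothendieckTopology Y) (Opens.grothendieckTopology X))).app G)).hom)
  rw [← hcomp] at hb2
  exact (Function.Bijective.of_comp_iff' h3 _).mp hb2

end Stmt0Aux

/-- Let `f : X → Y` be a continuous open surjection with connected fibers
between topological spaces, with `X` connected. Then for any sheaf of types `G` on `Y`, the
global sections of the pullback sheaf `f⁻¹G` are naturally isomorphic to the global sections
of `G`: the canonical comparison map (the component at the top open set of the unit of the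
pullback–pushforward adjunction, `G(Y) → (f_* f⁻¹ G)(Y) = (f⁻¹G)(X)`) is an isomorphism. -/
theorem stmt0 {X Y : TopCat.{0}} (f : X ⟶ Y)
    (hopen : IsOpenMap f) (hsurj : Function.Surjective f)
    (hfib : ∀ y : Y, IsConnected (f ⁻¹' {y}))
    (hconn : ConnectedSpace X)
    (G : TopCat.Sheaf (Type) Y) :
    IsIso (((TopCat.Sheaf.pullbackPushforwardAdjunction (Type) f).unit.app G).hom.app (op ⊤)) := by
  rw [CategoryTheory.isIso_iff_bijective]
  exact Stmt0Aux.key f hopen hsurj hfib G _ _ (fun x => Stmt0Aux.psi_unit_bijective f G x)
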